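/- arXiv:2405.15106 — 4 statements merged into one kernel-verified Lean document; each statement's English description precedes it below -/
import Mathlib

section
/- Let $S_1,\ldots,S_{n+1}$ be exchangeable real-valued random variables. Define the conformal p-value $\hat{u} = \frac{1 + \#\{i \in \{1,\ldots,n\} : S_i \le S_{n+1}\}}{n+1}$. Then $\hat{u}$ is super-uniform: for every $\alpha \in (0,1)$, $\mathbb{P}[\hat{u} \le \alpha] \le \alpha$. -/
open MeasureTheory
open scoped ENNReal

/-- Rank (with ties counted weakly) of coordinate `j` in `x`. -/
noncomputable def confRank (n : ℕ) (x : Fin (n + 1) → ℝ) (j : Fin (n + 1)) : ℕ :=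
  (Finset.univ.filter (fun i => x i ≤ x j)).card

lemma confRank_count_le (n : ℕ) (x : Fin (n + 1) → ℝ) (k : ℕ) :
    (Finset.univ.filter (fun j => confRank n x j ≤ k)).card ≤ k := by
  set A := Finset.univ.filter (fun j => confRank n x j ≤ k) with hA
  rcases A.eq_empty_or_nonempty with h | h
  · simp [h]
  · obtain ⟨j₀, hj₀A, hj₀⟩ := A.exists_max_image x h
    have hsub : A ⊆ Finset.univ.filter (fun i => x i ≤ x j₀) := by
      intro j hj
      exact Finset.mem_filter.mpr ⟨Finset.mem_univ j, hj₀ j hj⟩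
    calc A.card ≤ (Finset.univ.filter (fun i => x i ≤ x j₀)).card := Finset.card_le_card hsub
      _ = confRank n x j₀ := rfl
      _ ≤ k := (Finset.mem_filter.mp hj₀A).2

lemma confRank_swap (n : ℕ) (x : Fin (n + 1) → ℝ) (j : Fin (n + 1)) :
    confRank n (x ∘ Equiv.swap j (Fin.last n)) (Fin.last n) = confRank n x j := by
  set σ := Equiv.swap j (Fin.last n) with hσ
  have hσlast : σ (Fin.last n) = j := Equiv.swap_apply_right _ _
  unfold confRank
  have : (Finset.univ.filter (fun i => (x ∘ σ) i ≤ (x ∘ σ) (Fin.last n)))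
      = (Finset.univ.filter (fun i => x i ≤ x j)).map σ.symm.toEmbedding := by
    ext i
    simp [Finset.mem_map_equiv, hσlast]
  rw [this, Finset.card_map]

lemma confRank_measurable (n : ℕ) (j : Fin (n + 1)) :
    Measurable (fun x : Fin (n + 1) → ℝ => confRank n x j) := by
  unfold confRank
  simp_rw [Finset.card_filter]
  apply Finset.measurable_sum
  intro i _
  exact Measurable.ite (measurableSet_le (measurable_pi_apply i) (measurable_pi_apply j))
    measurable_const measurable_const

lemma confRank_last (n : ℕ) (x : Fin (n + 1) → ℝ) :
    confRank n x (Fin.last n)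
      = 1 + (Finset.univ.filter (fun i : Fin n => x i.castSucc ≤ x (Fin.last n))).card := by
  unfold confRank
  rw [Finset.card_filter, Fin.sum_univ_castSucc, if_pos le_rfl, ← Finset.card_filter, add_comm]

/-- Super-uniformity of the conformal p-value (ties allowed):
`û = (1 + #{i ≤ n : S_i ≤ S_{n+1}}) / (n+1)` satisfies `ℙ[û ≤ α] ≤ α`. -/
theorem conformal_pvalue_superuniform
    {Ω : Type*} [MeasurableSpace Ω] (P : Measure Ω) [IsProbabilityMeasure P]
    (n : ℕ) (S : Fin (n + 1) → Ω → ℝ) (hmeas : ∀ i, Measurable (S i))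
    (hexch : ∀ σ : Equiv.Perm (Fin (n + 1)),
      Measure.map (fun ω => fun i => S (σ i) ω) P = Measure.map (fun ω => fun i => S i ω) P) :
    ∀ α ∈ Set.Ioo (0 : ℝ) 1,
      P {ω | ((1 + (Finset.univ.filter
            (fun i : Fin n => S i.castSucc ω ≤ S (Fin.last n) ω)).card : ℝ) / (n + 1)) ≤ α}
        ≤ ENNReal.ofReal α := by
  rintro α ⟨hα0, hα1⟩
  set T : Ω → (Fin (n + 1) → ℝ) := fun ω i => S i ω with hT
  have hTm : Measurable T := measurable_pi_lambda _ hmeas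
  set k : ℕ := ⌊α * (n + 1)⌋₊ with hk
  set A : Fin (n + 1) → Set (Fin (n + 1) → ℝ) := fun j => {x | confRank n x j ≤ k} with hAdef
  have hAm : ∀ j, MeasurableSet (A j) := fun j =>
    (confRank_measurable n j) (by trivial : MeasurableSet {m : ℕ | m ≤ k})
  -- The event in the statement is `T ⁻¹' A (Fin.last n)`.
  have hEvent : {ω | ((1 + (Finset.univ.filter
        (fun i : Fin n => S i.castSucc ω ≤ S (Fin.last n) ω)).card : ℝ) / (n + 1)) ≤ α}
      = T ⁻¹' A (Fin.last n) := by
    ext ω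
    have hpos : (0 : ℝ) < (n : ℝ) + 1 := by positivity
    have hrk : confRank n (T ω) (Fin.last n)
        = 1 + (Finset.univ.filter
            (fun i : Fin n => S i.castSucc ω ≤ S (Fin.last n) ω)).card := confRank_last n (T ω)
    simp only [Set.mem_setOf_eq, Set.mem_preimage, hAdef, hrk]
    rw [div_le_iff₀ hpos, hk]
    rw [show ((1 : ℝ) + (Finset.univ.filter
        (fun i : Fin n => S i.castSucc ω ≤ S (Fin.last n) ω)).card)
      = ((1 + (Finset.univ.filter
        (fun i : Fin n => S i.castSucc ω ≤ S (Fin.last n) ω)).card : ℕ) : ℝ) by push_cast; ring]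
    exact (Nat.le_floor_iff (by positivity)).symm
  -- All the events `T ⁻¹' A j` have the same probability, by exchangeability.
  have hsame : ∀ j, P (T ⁻¹' A j) = P (T ⁻¹' A (Fin.last n)) := by
    intro j
    set σ : Equiv.Perm (Fin (n + 1)) := Equiv.swap j (Fin.last n) with hσ
    have hcomp : Measurable (fun x : Fin (n + 1) → ℝ => x ∘ σ) :=
      measurable_pi_lambda _ fun i => measurable_pi_apply (σ i)
    have hAj : A j = (fun x : Fin (n + 1) → ℝ => x ∘ σ) ⁻¹' A (Fin.last n) := by
      ext x
      simp only [hAdef, Set.mem_setOf_eq, Set.mem_preimage, confRank_swap n x j]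
      rw [hσ, confRank_swap n x j]
    calc P (T ⁻¹' A j) = Measure.map T P (A j) := (Measure.map_apply hTm (hAm j)).symm
      _ = Measure.map T P ((fun x : Fin (n + 1) → ℝ => x ∘ σ) ⁻¹' A (Fin.last n)) := by rw [hAj]
      _ = Measure.map (fun x : Fin (n + 1) → ℝ => x ∘ σ) (Measure.map T P) (A (Fin.last n)) :=
          (Measure.map_apply hcomp (hAm _)).symm
      _ = Measure.map (fun ω => fun i => S (σ i) ω) P (A (Fin.last n)) := by
          rw [Measure.map_map hcomp hTm]; rfl
      _ = Measure.map T P (A (Fin.last n)) := by rw [hexch σ]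
      _ = P (T ⁻¹' A (Fin.last n)) := Measure.map_apply hTm (hAm _)
  -- Counting bound: at most `k` of the `n+1` events can occur simultaneously.
  have hsum : ∑ j : Fin (n + 1), P (T ⁻¹' A j) ≤ (k : ℝ≥0∞) := by
    have h1 : ∀ j : Fin (n + 1), P (T ⁻¹' A j)
        = ∫⁻ ω, (T ⁻¹' A j).indicator (fun _ => (1 : ℝ≥0∞)) ω ∂P := fun j =>
      (lintegral_indicator_one (hTm (hAm j))).symm
    calc ∑ j : Fin (n + 1), P (T ⁻¹' A j)
        = ∫⁻ ω, ∑ j : Fin (n + 1), (T ⁻¹' A j).indicator (fun _ => (1 : ℝ≥0∞)) ω ∂P := by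
          simp_rw [h1]
          exact (lintegral_finset_sum _ fun j _ =>
            (measurable_const.indicator (hTm (hAm j)))).symm
      _ ≤ ∫⁻ _, (k : ℝ≥0∞) ∂P := by
          apply lintegral_mono
          intro ω
          have : ∑ j : Fin (n + 1), (T ⁻¹' A j).indicator (fun _ => (1 : ℝ≥0∞)) ω
              = ((Finset.univ.filter (fun j => confRank n (T ω) j ≤ k)).card : ℝ≥0∞) := by
            rw [Finset.card_filter, Nat.cast_sum]
            refine Finset.sum_congr rfl fun j _ => ?_
            by_cases hj : confRank n (T ω) j ≤ k
            · simp [Set.indicator_of_mem, hAdef, hj]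
            · simp [Set.indicator_of_notMem, hAdef, hj]
          simp only []
          rw [this]
          exact_mod_cast Nat.cast_le.mpr (confRank_count_le n (T ω) k)
      _ = (k : ℝ≥0∞) := by simp
  have hmul : ((n : ℝ≥0∞) + 1) * P (T ⁻¹' A (Fin.last n)) ≤ (k : ℝ≥0∞) := by
    calc ((n : ℝ≥0∞) + 1) * P (T ⁻¹' A (Fin.last n))
        = ∑ _j : Fin (n + 1), P (T ⁻¹' A (Fin.last n)) := by
          rw [Finset.sum_const, Finset.card_univ, Fintype.card_fin, nsmul_eq_mul]
          push_cast; ring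
      _ = ∑ j : Fin (n + 1), P (T ⁻¹' A j) := by
          exact Finset.sum_congr rfl fun j _ => (hsame j).symm
      _ ≤ (k : ℝ≥0∞) := hsum
  -- Conclude.
  have hkle : (k : ℝ≥0∞) ≤ ENNReal.ofReal α * ((n : ℝ≥0∞) + 1) := by
    have h1 : (k : ℝ) ≤ α * ((n : ℝ) + 1) := by
      have := Nat.floor_le (by positivity : (0 : ℝ) ≤ α * ((n : ℕ) + 1))
      rw [hk]; push_cast at this ⊢; linarith
    calc (k : ℝ≥0∞) = ENNReal.ofReal (k : ℝ) := by simp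
      _ ≤ ENNReal.ofReal (α * ((n : ℝ) + 1)) := ENNReal.ofReal_le_ofReal h1
      _ = ENNReal.ofReal α * ENNReal.ofReal ((n : ℝ) + 1) :=
          ENNReal.ofReal_mul hα0.le
      _ = ENNReal.ofReal α * ((n : ℝ≥0∞) + 1) := by
          congr 1
          rw [show ((n : ℝ) + 1) = ((n + 1 : ℕ) : ℝ) by push_cast; ring, ENNReal.ofReal_natCast]
          push_cast; ring
  rw [hEvent]
  have hne0 : ((n : ℝ≥0∞) + 1) ≠ 0 := by simp
  have hnetop : ((n : ℝ≥0∞) + 1) ≠ ⊤ := by simp [ENNReal.add_ne_top]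
  have := hmul.trans hkle
  rw [mul_comm (ENNReal.ofReal α) _] at this
  exact (ENNReal.mul_le_mul_iff_right hne0 hnetop).mp this
end

section
/- Let $S_1,\ldots,S_{n+1}$ be exchangeable real-valued random variables, and let $\hat{Q}$ denote the $\lceil (1-\alpha)(n+1) \rceil$-th smallest value among $S_1,\ldots,S_n$ (with $\hat{Q} = +\infty$ if $\lceil (1-\alpha)(n+1)\rceil > n$). Then $\mathbb{P}[S_{n+1} \le \hat{Q}] \ge 1-\alpha$. -/
open MeasureTheory
open scoped ENNReal

/-- The `k`-th smallest value (1-indexed) of a finite family of reals. -/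
noncomputable def kthSmallest {n : ℕ} (v : Fin n → ℝ) (k : ℕ) : ℝ :=
  ((Multiset.map v Finset.univ.val).sort (· ≤ ·)).getD (k - 1) 0

section aux

lemma cql_countP_lt_le_of_le_get {l : List ℝ} (hl : l.Pairwise (· ≤ ·)) {j : ℕ} (hj : j < l.length)
    {x : ℝ} (hx : x ≤ l.get ⟨j, hj⟩) : l.countP (fun y => y < x) ≤ j := by
  have h := List.take_append_drop j l
  have h2 : l.countP (fun y => y < x) =
      (l.take j).countP (fun y => y < x) + (l.drop j).countP (fun y => y < x) := by
    conv_lhs => rw [← h]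
    rw [List.countP_append]
  have hdrop : (l.drop j).countP (fun y => y < x) = 0 := by
    rw [List.countP_eq_zero]
    intro a ha
    obtain ⟨i, hi, rfl⟩ := List.getElem_of_mem ha
    simp only [List.length_drop] at hi
    rw [List.getElem_drop]
    simp only [decide_eq_true_eq, not_lt]
    refine le_trans hx ?_
    exact hl.rel_get_of_le (a := ⟨j, hj⟩) (b := ⟨j + i, by omega⟩) (by simp)
  have htake : (l.take j).countP (fun y => y < x) ≤ j := by
    calc (l.take j).countP (fun y => y < x) ≤ (l.take j).length := List.countP_le_length
    _ ≤ j := by simp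
  omega

lemma cql_le_get_of_countP_lt_le {l : List ℝ} (hl : l.Pairwise (· ≤ ·)) {j : ℕ} (hj : j < l.length)
    {x : ℝ} (hc : l.countP (fun y => y < x) ≤ j) : x ≤ l.get ⟨j, hj⟩ := by
  by_contra hlt
  push_neg at hlt
  have heq : (l.take (j+1)).countP (fun y => y < x) = (l.take (j+1)).length := by
    rw [List.countP_eq_length]
    intro a ha
    obtain ⟨i, hi, rfl⟩ := List.getElem_of_mem ha
    simp only [List.length_take, lt_min_iff] at hi
    rw [List.getElem_take]
    simp only [decide_eq_true_eq]
    refine lt_of_le_of_lt ?_ hlt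
    exact hl.rel_get_of_le (a := ⟨i, by omega⟩) (b := ⟨j, hj⟩) (by simp; omega)
  have hsub : (l.take (j+1)).countP (fun y => y < x) ≤ l.countP (fun y => y < x) :=
    (List.take_sublist _ _).countP_le
  have hlen : (l.take (j+1)).length = j+1 := by simp; omega
  omega

lemma cql_countP_le_get {l : List ℝ} (hl : l.Pairwise (· ≤ ·)) {j : ℕ} (hj : j < l.length) :
    j + 1 ≤ l.countP (fun y => y ≤ l.get ⟨j, hj⟩) := by
  have hsub : (l.take (j+1)).countP (fun y => y ≤ l.get ⟨j, hj⟩) ≤ l.countP _ :=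
    (List.take_sublist _ _).countP_le
  have heq : (l.take (j+1)).countP (fun y => y ≤ l.get ⟨j, hj⟩) = (l.take (j+1)).length := by
    rw [List.countP_eq_length]
    intro a ha
    obtain ⟨i, hi, rfl⟩ := List.getElem_of_mem ha
    simp only [List.length_take, lt_min_iff] at hi
    rw [List.getElem_take]
    simp only [decide_eq_true_eq]
    exact hl.rel_get_of_le (a := ⟨i, by omega⟩) (b := ⟨j, hj⟩) (by simp; omega)
  have hlen : (l.take (j+1)).length = j+1 := by simp; omega
  omega

variable {m k : ℕ} (v : Fin m → ℝ)

lemma cql_sort_len : (((Multiset.map v Finset.univ.val).sort (· ≤ ·))).length = m := by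
  rw [Multiset.length_sort, Multiset.card_map]; simp

lemma cql_countP_sort (p : ℝ → Prop) [DecidablePred p] :
    (((Multiset.map v Finset.univ.val).sort (· ≤ ·))).countP (fun y => decide (p y)) =
      (Finset.univ.filter (fun i => p (v i))).card := by
  rw [← Multiset.coe_countP, Multiset.sort_eq, Multiset.countP_map]
  rfl

lemma cql_le_kthSmallest_iff (hk1 : 1 ≤ k) (hkm : k ≤ m) (x : ℝ) :
    x ≤ kthSmallest v k ↔ (Finset.univ.filter (fun i => v i < x)).card ≤ k - 1 := by
  set l := ((Multiset.map v Finset.univ.val).sort (· ≤ ·)) with hl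
  have hsorted : l.Pairwise (· ≤ ·) := Multiset.pairwise_sort _ _
  have hlen : l.length = m := cql_sort_len v
  have hj : k - 1 < l.length := by omega
  have hget : kthSmallest v k = l.get ⟨k - 1, hj⟩ := by
    rw [kthSmallest, ← hl, List.getD_eq_getElem _ _ hj]; rfl
  rw [hget, ← cql_countP_sort v (fun y => y < x), ← hl]
  exact ⟨fun h => cql_countP_lt_le_of_le_get hsorted hj h,
    fun h => cql_le_get_of_countP_lt_le hsorted hj h⟩

lemma cql_kth_card_le (hk1 : 1 ≤ k) (hkm : k ≤ m) :
    k ≤ (Finset.univ.filter (fun i => v i ≤ kthSmallest v k)).card := by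
  set l := ((Multiset.map v Finset.univ.val).sort (· ≤ ·)) with hl
  have hsorted : l.Pairwise (· ≤ ·) := Multiset.pairwise_sort _ _
  have hlen : l.length = m := cql_sort_len v
  have hj : k - 1 < l.length := by omega
  have hget : kthSmallest v k = l.get ⟨k - 1, hj⟩ := by
    rw [kthSmallest, ← hl, List.getD_eq_getElem _ _ hj]; rfl
  rw [hget, ← cql_countP_sort v (fun y => y ≤ l.get ⟨k - 1, hj⟩), ← hl]
  have := cql_countP_le_get hsorted hj
  omega

lemma cql_count_good (hk1 : 1 ≤ k) (hkm : k ≤ m) :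
    k ≤ (Finset.univ.filter
      (fun j => (Finset.univ.filter (fun i => v i < v j)).card ≤ k - 1)).card := by
  refine le_trans (cql_kth_card_le v hk1 hkm) (Finset.card_le_card ?_)
  intro j hj
  simp only [Finset.mem_filter, Finset.mem_univ, true_and] at hj ⊢
  exact (cql_le_kthSmallest_iff v hk1 hkm (v j)).mp hj

end aux

/-- Conformal quantile lemma: with `Q̂` the `⌈(1-α)(n+1)⌉`-th smallest of `S_1, ..., S_n`
(`+∞` if `⌈(1-α)(n+1)⌉ > n`), exchangeability yields `ℙ[S_{n+1} ≤ Q̂] ≥ 1 - α`. -/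
theorem conformal_quantile_lemma
    {Ω : Type*} [MeasurableSpace Ω] (P : Measure Ω) [IsProbabilityMeasure P]
    (n : ℕ) (S : Fin (n + 1) → Ω → ℝ) (hmeas : ∀ i, Measurable (S i))
    (hexch : ∀ σ : Equiv.Perm (Fin (n + 1)),
      Measure.map (fun ω => fun i => S (σ i) ω) P = Measure.map (fun ω => fun i => S i ω) P)
    (α : ℝ) (hα : α ∈ Set.Ioo (0 : ℝ) 1) :
    ENNReal.ofReal (1 - α) ≤
      P {ω | n < ⌈(1 - α) * (n + 1 : ℝ)⌉₊ ∨
        S (Fin.last n) ω ≤ kthSmallest (fun i : Fin n => S i.castSucc ω)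
          ⌈(1 - α) * (n + 1 : ℝ)⌉₊} := by
  obtain ⟨hα0, hα1⟩ := hα
  set k : ℕ := ⌈(1 - α) * (n + 1 : ℝ)⌉₊ with hkdef
  have hpos : (0 : ℝ) < (1 - α) * (n + 1 : ℝ) := by
    have h1 : (0:ℝ) < 1 - α := by linarith
    positivity
  have hk1 : 1 ≤ k := Nat.ceil_pos.mpr hpos
  have hksucc : k ≤ n + 1 := by
    rw [hkdef]
    refine Nat.ceil_le.mpr ?_
    have : (1 - α) * (n + 1 : ℝ) ≤ 1 * (n + 1 : ℝ) := by nlinarith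
    push_cast
    linarith
  by_cases hk : n < k
  · have : {ω | n < k ∨
        S (Fin.last n) ω ≤ kthSmallest (fun i : Fin n => S i.castSucc ω) k} = Set.univ := by
      ext ω; simp [hk]
    rw [this, measure_univ]
    exact le_trans (ENNReal.ofReal_le_one.mpr (by linarith)) le_rfl
  · push_neg at hk
    -- the events
    set A : Fin (n + 1) → Set Ω := fun j =>
      {ω | (Finset.univ.filter (fun i => S i ω < S j ω)).card ≤ k - 1} with hAdef
    have hgm : ∀ j, Measurable (fun ω => (Finset.univ.filter (fun i => S i ω < S j ω)).card) := by
      intro j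
      have : (fun ω => (Finset.univ.filter (fun i => S i ω < S j ω)).card) =
          fun ω => ∑ i : Fin (n+1), if S i ω < S j ω then 1 else 0 := by
        funext ω; rw [Finset.card_filter]
      rw [this]
      exact Finset.measurable_sum _ fun i _ =>
        Measurable.ite (measurableSet_lt (hmeas i) (hmeas j)) measurable_const measurable_const
    have hA : ∀ j, MeasurableSet (A j) := by
      intro j
      exact (hgm j) (measurableSet_le measurable_id measurable_const)
    -- exchangeability: all A j have the same probability
    have hmapA : ∀ j, P (A j) = P (A (Fin.last n)) := by
      intro j
      set σ : Equiv.Perm (Fin (n + 1)) := Equiv.swap j (Fin.last n) with hσdef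
      set B : Set (Fin (n + 1) → ℝ) :=
        {v | (Finset.univ.filter (fun i => v i < v (Fin.last n))).card ≤ k - 1} with hBdef
      have hB : MeasurableSet B := by
        have hgm' : Measurable (fun v : Fin (n+1) → ℝ =>
            (Finset.univ.filter (fun i => v i < v (Fin.last n))).card) := by
          have : (fun v : Fin (n+1) → ℝ =>
              (Finset.univ.filter (fun i => v i < v (Fin.last n))).card) =
              fun v => ∑ i : Fin (n+1), if v i < v (Fin.last n) then 1 else 0 := by
            funext v; rw [Finset.card_filter]
          rw [this]
          exact Finset.measurable_sum _ fun i _ =>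
            Measurable.ite (measurableSet_lt (measurable_pi_apply i)
              (measurable_pi_apply (Fin.last n))) measurable_const measurable_const
        exact hgm' (measurableSet_le measurable_id measurable_const)
      have hS : Measurable (fun ω => fun i => S i ω) := measurable_pi_lambda _ hmeas
      have hSσ : Measurable (fun ω => fun i => S (σ i) ω) :=
        measurable_pi_lambda _ (fun i => hmeas (σ i))
      have h := congrArg (fun μ : Measure (Fin (n+1) → ℝ) => μ B) (hexch σ)
      rw [Measure.map_apply hSσ hB, Measure.map_apply hS hB] at h
      have h1 : (fun ω => fun i => S i ω) ⁻¹' B = A (Fin.last n) := rfl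
      have h2 : (fun ω => fun i => S (σ i) ω) ⁻¹' B = A j := by
        ext ω
        simp only [Set.mem_preimage, hBdef, Set.mem_setOf_eq, hAdef]
        have hσlast : σ (Fin.last n) = j := Equiv.swap_apply_right _ _
        have hcard : (Finset.univ.filter (fun i => S (σ i) ω < S j ω)).card =
            (Finset.univ.filter (fun i => S i ω < S j ω)).card := by
          refine Finset.card_equiv σ ?_
          intro i
          simp
        simp only [hσlast]
        rw [hcard]
      rw [h1, h2] at h
      exact h
    -- sum lower bound
    have hsum : (k : ℝ≥0∞) ≤ ∑ j : Fin (n+1), P (A j) := by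
      have hptwise : ∀ ω, (k : ℝ≥0∞) ≤ ∑ j : Fin (n+1), (A j).indicator 1 ω := by
        intro ω
        have : ∑ j : Fin (n+1), (A j).indicator (1 : Ω → ℝ≥0∞) ω =
            ∑ j : Fin (n+1), if ω ∈ A j then 1 else 0 := by
          refine Finset.sum_congr rfl fun j _ => ?_
          rw [Set.indicator_apply]; split <;> rfl
        rw [this, Finset.sum_boole]
        have hcg := cql_count_good (fun i => S i ω) hk1 hksucc
        have : k ≤ (Finset.univ.filter (fun j => ω ∈ A j)).card := by
          refine le_trans hcg (le_of_eq ?_)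
          congr 1
        exact_mod_cast this
      calc (k : ℝ≥0∞) = ∫⁻ _, (k : ℝ≥0∞) ∂P := by
            rw [lintegral_const, measure_univ, mul_one]
        _ ≤ ∫⁻ ω, ∑ j : Fin (n+1), (A j).indicator 1 ω ∂P := lintegral_mono hptwise
        _ = ∑ j : Fin (n+1), ∫⁻ ω, (A j).indicator 1 ω ∂P :=
            lintegral_finset_sum _ fun j _ => (measurable_one).indicator (hA j)
        _ = ∑ j : Fin (n+1), P (A j) := by
            refine Finset.sum_congr rfl fun j _ => lintegral_indicator_one (hA j)
    have hsum' : (k : ℝ≥0∞) ≤ (n + 1 : ℝ≥0∞) * P (A (Fin.last n)) := by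
      refine le_trans hsum (le_of_eq ?_)
      rw [Finset.sum_congr rfl fun j _ => hmapA j, Finset.sum_const, Finset.card_univ,
        Fintype.card_fin, nsmul_eq_mul]
      push_cast
      ring
    -- conclude the probability bound
    have hfinal : ENNReal.ofReal (1 - α) ≤ P (A (Fin.last n)) := by
      have hne0 : ((n : ℝ≥0∞) + 1) ≠ 0 := by simp
      have hnetop : ((n : ℝ≥0∞) + 1) ≠ ⊤ := by simp [ENNReal.add_eq_top]
      have h1 : ENNReal.ofReal (1 - α) * ((n : ℝ≥0∞) + 1) ≤ (k : ℝ≥0∞) := by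
        have heq : ENNReal.ofReal (1 - α) * ((n : ℝ≥0∞) + 1) =
            ENNReal.ofReal ((1 - α) * (n + 1)) := by
          rw [ENNReal.ofReal_mul (by linarith)]
          congr 1
          rw [ENNReal.ofReal_add (by positivity) (by norm_num)]
          simp [ENNReal.ofReal_natCast]
        rw [heq]
        calc ENNReal.ofReal ((1 - α) * (n + 1)) ≤ ENNReal.ofReal (k : ℝ) :=
              ENNReal.ofReal_le_ofReal (Nat.le_ceil _)
          _ = (k : ℝ≥0∞) := ENNReal.ofReal_natCast k
      have h2 : ENNReal.ofReal (1 - α) ≤ (k : ℝ≥0∞) / ((n : ℝ≥0∞) + 1) :=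
        (ENNReal.le_div_iff_mul_le (Or.inl hne0) (Or.inl hnetop)).mpr h1
      have h3 : (k : ℝ≥0∞) / ((n : ℝ≥0∞) + 1) ≤ P (A (Fin.last n)) := by
        refine ENNReal.div_le_of_le_mul ?_
        rw [mul_comm] at hsum'
        exact hsum'
      exact h2.trans h3
    -- identify the event
    have hset : {ω | n < k ∨
        S (Fin.last n) ω ≤ kthSmallest (fun i : Fin n => S i.castSucc ω) k} =
        A (Fin.last n) := by
      ext ω
      simp only [Set.mem_setOf_eq, hAdef, hk.not_gt, false_or]
      rw [cql_le_kthSmallest_iff (fun i : Fin n => S i.castSucc ω) hk1 hk]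
      have hcard : (Finset.univ.filter
            (fun i : Fin (n+1) => S i ω < S (Fin.last n) ω)).card =
          (Finset.univ.filter
            (fun i : Fin n => S i.castSucc ω < S (Fin.last n) ω)).card := by
        rw [Finset.card_filter, Finset.card_filter, Fin.sum_univ_castSucc]
        simp
      rw [hcard]
    rw [hset]
    exact hfinal
end

section
/- Let $(X_1,Y_1),\ldots,(X_{n+1},Y_{n+1})$ be exchangeable random pairs, let $s$ be a fixed measurable score function, and set $S_i = s(X_i,Y_i)$. Define the split conformal prediction set $\hat{C}(X_{n+1}) = \{y : s(X_{n+1},y) \le \hat{Q}\}$, where $\hat{Q}$ is the $\lceil (1-\alpha)(n+1)\rceil$-th smallest of $S_1,\ldots,S_n$. Then $\mathbb{P}[Y_{n+1} \in \hat{C}(X_{n+1})] \ge 1-\alpha$. -/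
open MeasureTheory Finset
open scoped ENNReal

lemma card_filter_comp_perm {m : ℕ} (σ : Equiv.Perm (Fin m)) (p : Fin m → Prop)
    [DecidablePred p] :
    (univ.filter fun i => p (σ i)).card = (univ.filter p).card := by
  have h : univ.filter (fun i => p (σ i)) = (univ.filter p).image σ.symm := by
    ext q
    simp only [mem_filter, mem_image, mem_univ, true_and]
    constructor
    · intro hq; exact ⟨σ q, hq, σ.symm_apply_apply q⟩
    · rintro ⟨i, hi, rfl⟩; simpa using hi
  rw [h, Finset.card_image_of_injective _ σ.symm.injective]

lemma counting_lemma {m k : ℕ} (hk : k ≤ m) (w : Fin m → ℝ) :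
    k ≤ (univ.filter fun j => (univ.filter fun i => w i < w j).card ≤ k - 1).card := by
  rcases Nat.eq_zero_or_pos k with rfl | hk1
  · exact Nat.zero_le _
  set σ := Tuple.sort w with hσ
  have hmono : Monotone (w ∘ σ) := Tuple.monotone_sort w
  have key : ∀ p : Fin m, (univ.filter fun i => w i < w (σ p)).card ≤ (p : ℕ) := by
    intro p
    rw [← card_filter_comp_perm σ (fun i => w i < w (σ p))]
    calc (univ.filter fun q => w (σ q) < w (σ p)).card
        ≤ (Finset.Iio p).card := by
          apply Finset.card_le_card
          intro q hq
          simp only [mem_filter, mem_univ, true_and, Finset.mem_Iio] at *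
          by_contra h
          exact absurd (hmono (not_lt.mp h : p ≤ q)) (not_le.mpr hq)
      _ = (p : ℕ) := Fin.card_Iio p
  have hinj : Function.Injective (fun p : Fin k => σ (Fin.castLE hk p)) :=
    σ.injective.comp (Fin.castLE_injective hk)
  calc k = (univ : Finset (Fin k)).card := by simp
    _ ≤ _ := Finset.card_le_card_of_injOn (fun p => σ (Fin.castLE hk p))
        (by
          intro p _
          simp only [Finset.mem_coe, mem_filter, mem_univ, true_and]
          exact le_trans (key (Fin.castLE hk p)) (Nat.le_sub_one_of_lt p.isLt))
        (hinj.injOn)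

lemma kthSmallest_eq {n : ℕ} (v : Fin n → ℝ) (k : ℕ) (h1 : 1 ≤ k) (h2 : k ≤ n) :
    kthSmallest v k = v (Tuple.sort v ⟨k - 1, lt_of_lt_of_le (Nat.sub_lt h1 one_pos) h2⟩) := by
  set σ := Tuple.sort v with hσ
  have hmono : Monotone (v ∘ σ) := Tuple.monotone_sort v
  have hms : Multiset.map v Finset.univ.val = ↑(List.ofFn (v ∘ σ)) := by
    have h1' : Multiset.map (⇑σ) Finset.univ.val = Finset.univ.val := by
      have := congr_arg Finset.val (Finset.map_univ_equiv σ)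
      simp only [Finset.map_val, Equiv.coe_toEmbedding] at this; exact this
    calc Multiset.map v Finset.univ.val
        = Multiset.map v (Multiset.map (⇑σ) Finset.univ.val) := by rw [h1']
      _ = Multiset.map (v ∘ σ) Finset.univ.val := by rw [Multiset.map_map]
      _ = ↑(List.ofFn (v ∘ σ)) := by exact Fin.univ_val_map _
  have hsortlist : (Multiset.map v Finset.univ.val).sort (· ≤ ·) = List.ofFn (v ∘ σ) := by
    refine List.Perm.eq_of_pairwise' (Multiset.pairwise_sort _ _) hmono.sortedLE_ofFn.pairwise ?_
    rw [← Multiset.coe_eq_coe, Multiset.sort_eq, hms]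
  have hlen : k - 1 < (List.ofFn (v ∘ σ)).length := by
    rw [List.length_ofFn]; exact lt_of_lt_of_le (Nat.sub_lt h1 one_pos) h2
  rw [kthSmallest, hsortlist, List.getD_eq_getElem _ _ hlen, List.getElem_ofFn]
  rfl

lemma le_kthSmallest_iff {n : ℕ} (v : Fin n → ℝ) (k : ℕ) (h1 : 1 ≤ k) (h2 : k ≤ n) (t : ℝ) :
    t ≤ kthSmallest v k ↔ (univ.filter fun i => v i < t).card ≤ k - 1 := by
  have hkn : k - 1 < n := lt_of_lt_of_le (Nat.sub_lt h1 one_pos) h2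
  set σ := Tuple.sort v with hσ
  have hmono : Monotone (v ∘ σ) := Tuple.monotone_sort v
  rw [kthSmallest_eq v k h1 h2, ← card_filter_comp_perm σ (fun i => v i < t)]
  set pk : Fin n := ⟨k - 1, hkn⟩ with hpk
  constructor
  · intro ht
    calc (univ.filter fun q => v (σ q) < t).card
        ≤ (Finset.Iio pk).card := by
          apply Finset.card_le_card
          intro q hq
          simp only [mem_filter, mem_univ, true_and, Finset.mem_Iio] at *
          by_contra h
          have : v (σ pk) ≤ v (σ q) := hmono (not_lt.mp h)
          linarith
      _ = k - 1 := Fin.card_Iio pk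
  · intro hc
    by_contra ht
    push_neg at ht
    have hsub : Finset.Iic pk ⊆ univ.filter fun q => v (σ q) < t := by
      intro q hq
      simp only [Finset.mem_Iic] at hq
      simp only [mem_filter, mem_univ, true_and]
      exact lt_of_le_of_lt (hmono hq) ht
    have := Finset.card_le_card hsub
    rw [Fin.card_Iic] at this
    simp only [hpk] at this
    omega

/-- Marginal coverage of split conformal prediction: with scores `S_i = s(X_i, Y_i)` from
exchangeable pairs and `Q̂` the `⌈(1-α)(n+1)⌉`-th smallest calibration score (`+∞` if that
index exceeds `n`), the set `Ĉ(X_{n+1}) = {y : s(X_{n+1}, y) ≤ Q̂}` covers `Y_{n+1}` with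
probability at least `1 - α`. -/
theorem split_conformal_marginal_coverage
    {Ω 𝒳 𝒴 : Type*} [MeasurableSpace Ω] [MeasurableSpace 𝒳] [MeasurableSpace 𝒴]
    (P : Measure Ω) [IsProbabilityMeasure P]
    (n : ℕ) (X : Fin (n + 1) → Ω → 𝒳) (Y : Fin (n + 1) → Ω → 𝒴)
    (hmeas : ∀ i, Measurable (fun ω => (X i ω, Y i ω)))
    (hexch : ∀ σ : Equiv.Perm (Fin (n + 1)),
      Measure.map (fun ω => fun i => (X (σ i) ω, Y (σ i) ω)) P
        = Measure.map (fun ω => fun i => (X i ω, Y i ω)) P)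
    (s : 𝒳 → 𝒴 → ℝ) (hs : Measurable (fun p : 𝒳 × 𝒴 => s p.1 p.2))
    (α : ℝ) (hα : α ∈ Set.Ioo (0 : ℝ) 1) :
    ENNReal.ofReal (1 - α) ≤
      P {ω | n < ⌈(1 - α) * (n + 1 : ℝ)⌉₊ ∨
        s (X (Fin.last n) ω) (Y (Fin.last n) ω) ≤
          kthSmallest (fun i : Fin n => s (X i.castSucc ω) (Y i.castSucc ω))
            ⌈(1 - α) * (n + 1 : ℝ)⌉₊} := by
  classical
  obtain ⟨hα0, hα1⟩ := hα
  set k := ⌈(1 - α) * (n + 1 : ℝ)⌉₊ with hkdef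
  by_cases hkn : n < k
  · have hset : {ω | n < k ∨
        s (X (Fin.last n) ω) (Y (Fin.last n) ω) ≤
          kthSmallest (fun i : Fin n => s (X i.castSucc ω) (Y i.castSucc ω)) k} = Set.univ := by
      ext ω
      simp only [Set.mem_setOf_eq, Set.mem_univ, iff_true]
      exact Or.inl hkn
    rw [hset, measure_univ]
    exact ENNReal.ofReal_le_one.mpr (by linarith)
  push_neg at hkn
  have hk1 : 1 ≤ k := by
    rw [hkdef]
    exact Nat.ceil_pos.mpr (mul_pos (by linarith) (by positivity))
  set Z : Ω → (Fin (n+1) → 𝒳 × 𝒴) := fun ω i => (X i ω, Y i ω) with hZdef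
  have hZ : Measurable Z := measurable_pi_lambda _ fun i => hmeas i
  set A : Fin (n+1) → Set (Fin (n+1) → 𝒳 × 𝒴) := fun j =>
    {f | (univ.filter fun i => s (f i).1 (f i).2 < s (f j).1 (f j).2).card ≤ k - 1} with hA
  have hsmeas : ∀ j : Fin (n+1), Measurable fun f : Fin (n+1) → 𝒳 × 𝒴 => s (f j).1 (f j).2 :=
    fun j => hs.comp (measurable_pi_apply j)
  have hAmeas : ∀ j, MeasurableSet (A j) := by
    intro j
    have hcardsum : ∀ f : Fin (n+1) → 𝒳 × 𝒴,
        ((univ.filter fun i => s (f i).1 (f i).2 < s (f j).1 (f j).2).card : ℝ)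
          = ∑ i : Fin (n+1), if s (f i).1 (f i).2 < s (f j).1 (f j).2 then (1:ℝ) else 0 := by
      intro f
      rw [Finset.card_filter]
      push_cast
      rfl
    have hrepr : A j = (fun f : Fin (n+1) → 𝒳 × 𝒴 =>
        ∑ i : Fin (n+1), if s (f i).1 (f i).2 < s (f j).1 (f j).2 then (1:ℝ) else 0)
          ⁻¹' Set.Iic ((k - 1 : ℕ) : ℝ) := by
      ext f
      simp only [hA, Set.mem_setOf_eq, Set.mem_preimage, Set.mem_Iic]
      rw [← hcardsum f, Nat.cast_le]
    rw [hrepr]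
    exact (Finset.measurable_sum _ fun i _ =>
      Measurable.ite (measurableSet_lt (hsmeas i) (hsmeas j)) measurable_const measurable_const)
      measurableSet_Iic
  have hmeasE : ∀ j, MeasurableSet (Z ⁻¹' A j) := fun j => hZ (hAmeas j)
  have hswap : ∀ j : Fin (n+1), P (Z ⁻¹' A j) = P (Z ⁻¹' A (Fin.last n)) := by
    intro j
    set σ := Equiv.swap j (Fin.last n) with hσ
    have hcomp : Measurable fun f : Fin (n+1) → 𝒳 × 𝒴 => f ∘ σ :=
      measurable_pi_lambda _ fun i => measurable_pi_apply (σ i)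
    have hAeq : A j = (fun f : Fin (n+1) → 𝒳 × 𝒴 => f ∘ σ) ⁻¹' A (Fin.last n) := by
      ext f
      simp only [hA, Set.mem_setOf_eq, Set.mem_preimage, Function.comp_apply]
      have hlast : σ (Fin.last n) = j := Equiv.swap_apply_right j (Fin.last n)
      simp only [hlast]
      rw [card_filter_comp_perm σ (fun i => s (f i).1 (f i).2 < s (f j).1 (f j).2)]
    calc P (Z ⁻¹' A j) = (Measure.map Z P) (A j) := (Measure.map_apply hZ (hAmeas j)).symm
      _ = (Measure.map Z P) ((fun f : Fin (n+1) → 𝒳 × 𝒴 => f ∘ σ) ⁻¹' A (Fin.last n)) := by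
          rw [← hAeq]
      _ = (Measure.map (fun f : Fin (n+1) → 𝒳 × 𝒴 => f ∘ σ) (Measure.map Z P)) (A (Fin.last n)) :=
          (Measure.map_apply hcomp (hAmeas _)).symm
      _ = (Measure.map ((fun f : Fin (n+1) → 𝒳 × 𝒴 => f ∘ σ) ∘ Z) P) (A (Fin.last n)) := by
          rw [Measure.map_map hcomp hZ]
      _ = (Measure.map Z P) (A (Fin.last n)) := by
          have heq : ((fun f : Fin (n+1) → 𝒳 × 𝒴 => f ∘ σ) ∘ Z)
              = fun ω => fun i => (X (σ i) ω, Y (σ i) ω) := rfl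
          rw [heq, hexch σ]
      _ = P (Z ⁻¹' A (Fin.last n)) := Measure.map_apply hZ (hAmeas _)
  have hindic : ∀ (E : Fin (n+1) → Set Ω) (ω : Ω),
      ∑ j, (E j).indicator (fun _ => (1:ℝ≥0∞)) ω
        = ((univ.filter fun j => ω ∈ E j).card : ℝ≥0∞) := by
    intro E ω
    rw [Finset.card_filter]
    push_cast
    simp [Set.indicator_apply]
  have hpt : ∀ ω : Ω, (k : ℝ≥0∞) ≤ ∑ j, (Z ⁻¹' A j).indicator (fun _ => (1:ℝ≥0∞)) ω := by
    intro ω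
    rw [hindic]
    refine Nat.cast_le.mpr ?_
    have hcl := counting_lemma (le_trans hkn (Nat.le_succ n)) (fun j => s (X j ω) (Y j ω))
    refine le_trans hcl (le_of_eq ?_)
    congr 1
    apply Finset.filter_congr
    intro j _
    simp [hZdef, hA, Set.mem_preimage, Set.mem_setOf_eq]
  have hklel : (k : ℝ≥0∞) ≤ ((n + 1 : ℕ) : ℝ≥0∞) * P (Z ⁻¹' A (Fin.last n)) := by
    calc (k : ℝ≥0∞) = ∫⁻ _, (k : ℝ≥0∞) ∂P := by simp
      _ ≤ ∫⁻ ω, ∑ j, (Z ⁻¹' A j).indicator (fun _ => (1:ℝ≥0∞)) ω ∂P := lintegral_mono hpt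
      _ = ∑ j, ∫⁻ ω, (Z ⁻¹' A j).indicator (fun _ => (1:ℝ≥0∞)) ω ∂P :=
          lintegral_finset_sum _ fun j _ => measurable_const.indicator (hmeasE j)
      _ = ∑ j, P (Z ⁻¹' A j) :=
          Finset.sum_congr rfl fun j _ => lintegral_indicator_one (hmeasE j)
      _ = ∑ _j : Fin (n+1), P (Z ⁻¹' A (Fin.last n)) :=
          Finset.sum_congr rfl fun j _ => hswap j
      _ = ((n + 1 : ℕ) : ℝ≥0∞) * P (Z ⁻¹' A (Fin.last n)) := by
          simp [Finset.sum_const, Finset.card_univ]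
  have hkceil : (1 - α) * ((n + 1 : ℕ) : ℝ) ≤ (k : ℝ) := by
    rw [hkdef]
    push_cast
    exact Nat.le_ceil _
  have hfin : ENNReal.ofReal (1 - α) ≤ P (Z ⁻¹' A (Fin.last n)) := by
    have hc0 : ((n + 1 : ℕ) : ℝ≥0∞) ≠ 0 := by simp
    have hcT : ((n + 1 : ℕ) : ℝ≥0∞) ≠ ⊤ := ENNReal.natCast_ne_top _
    rw [← ENNReal.mul_le_mul_iff_right hc0 hcT]
    calc ((n + 1 : ℕ) : ℝ≥0∞) * ENNReal.ofReal (1 - α)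
        = ENNReal.ofReal (((n + 1 : ℕ) : ℝ) * (1 - α)) := by
          rw [ENNReal.ofReal_mul (by positivity), ENNReal.ofReal_natCast]
      _ ≤ (k : ℝ≥0∞) := by
          rw [← ENNReal.ofReal_natCast k]
          exact ENNReal.ofReal_le_ofReal (by rw [mul_comm]; exact hkceil)
      _ ≤ ((n + 1 : ℕ) : ℝ≥0∞) * P (Z ⁻¹' A (Fin.last n)) := hklel
  have hsubset : Z ⁻¹' A (Fin.last n) ⊆ {ω | n < k ∨
      s (X (Fin.last n) ω) (Y (Fin.last n) ω) ≤
        kthSmallest (fun i : Fin n => s (X i.castSucc ω) (Y i.castSucc ω)) k} := by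
    intro ω hω
    right
    rw [le_kthSmallest_iff _ k hk1 hkn]
    simp only [hZdef, hA, Set.mem_preimage, Set.mem_setOf_eq] at hω
    have hconv : (univ.filter fun i : Fin n =>
        s (X i.castSucc ω) (Y i.castSucc ω) < s (X (Fin.last n) ω) (Y (Fin.last n) ω)).card
        = (univ.filter fun i : Fin (n+1) =>
        s (X i ω) (Y i ω) < s (X (Fin.last n) ω) (Y (Fin.last n) ω)).card := by
      rw [Finset.card_filter, Finset.card_filter, Fin.sum_univ_castSucc]
      simp [lt_self_iff_false]
    rw [hconv]
    exact hω
  exact le_trans hfin (measure_mono hsubset)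
end

section
/- Let $S_1,\ldots,S_{n+1}$ be exchangeable (ties allowed) and define $\hat{u} = \frac{1 + \#\{i \le n : S_i \le S_{n+1}\}}{n+1}$. Then $\hat{u}$ stochastically dominates a random variable uniform on $\{\tfrac{1}{n+1},\ldots,1\}$: for every $t \in [0,1]$, $\mathbb{P}[\hat{u} \le t] \le \frac{\lfloor t(n+1) \rfloor}{n+1}$. -/
open MeasureTheory
open scoped ENNReal Classical

lemma rank_count_le {n : ℕ} (s : Fin (n + 1) → ℝ) (k : ℕ) :
    (Finset.univ.filter (fun j : Fin (n + 1) =>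
      (Finset.univ.filter (fun i => s i ≤ s j)).card ≤ k)).card ≤ k := by
  set A := Finset.univ.filter (fun j : Fin (n + 1) =>
      (Finset.univ.filter (fun i => s i ≤ s j)).card ≤ k) with hA
  rcases A.eq_empty_or_nonempty with h | h
  · simp [h]
  · obtain ⟨j, hjA, hj⟩ := Finset.exists_max_image A s h
    have hjk : (Finset.univ.filter (fun i => s i ≤ s j)).card ≤ k := by
      have := hjA
      rw [hA, Finset.mem_filter] at this
      exact this.2
    refine le_trans (Finset.card_le_card ?_) hjk
    intro a ha
    simp only [Finset.mem_filter, Finset.mem_univ, true_and]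
    exact hj a ha

lemma filter_perm_card {α : Type*} [Fintype α] [DecidableEq α]
    (σ : Equiv.Perm α) (p : α → Prop) [DecidablePred p] :
    (Finset.univ.filter (fun i => p (σ i))).card = (Finset.univ.filter p).card := by
  refine Finset.card_bij (fun i _ => σ i) ?_ ?_ ?_
  · intro a ha
    simp only [Finset.mem_filter, Finset.mem_univ, true_and] at ha ⊢
    exact ha
  · intro a _ b _ hab
    exact σ.injective hab
  · intro b hb
    simp only [Finset.mem_filter, Finset.mem_univ, true_and] at hb
    exact ⟨σ.symm b, by simpa using hb, by simp⟩

lemma measurable_rank_count {Ω : Type*} [MeasurableSpace Ω] {n : ℕ}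
    (S : Fin (n + 1) → Ω → ℝ) (hmeas : ∀ i, Measurable (S i)) (j : Fin (n + 1)) :
    Measurable (fun ω => (Finset.univ.filter (fun i => S i ω ≤ S j ω)).card) := by
  have : (fun ω => (Finset.univ.filter (fun i => S i ω ≤ S j ω)).card)
      = fun ω => ∑ i : Fin (n + 1), if S i ω ≤ S j ω then 1 else 0 := by
    funext ω
    rw [Finset.card_filter]
  rw [this]
  exact Finset.measurable_sum _ (fun i _ =>
    Measurable.ite (measurableSet_le (hmeas i) (hmeas j)) measurable_const measurable_const)

/-- Sharpened super-uniformity under possible ties: the conformal p-value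
`û = (1 + #{i ≤ n : S_i ≤ S_{n+1}})/(n+1)` stochastically dominates the uniform
distribution on `{1/(n+1), ..., 1}`: `ℙ[û ≤ t] ≤ ⌊t(n+1)⌋/(n+1)` for all `t ∈ [0,1]`. -/
theorem conformal_pvalue_discrete_dominance
    {Ω : Type*} [MeasurableSpace Ω] (P : Measure Ω) [IsProbabilityMeasure P]
    (n : ℕ) (S : Fin (n + 1) → Ω → ℝ) (hmeas : ∀ i, Measurable (S i))
    (hexch : ∀ σ : Equiv.Perm (Fin (n + 1)),
      Measure.map (fun ω => fun i => S (σ i) ω) P = Measure.map (fun ω => fun i => S i ω) P) :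
    ∀ t ∈ Set.Icc (0 : ℝ) 1,
      P {ω | ((1 + (Finset.univ.filter
            (fun i : Fin n => S i.castSucc ω ≤ S (Fin.last n) ω)).card : ℝ) / (n + 1)) ≤ t}
        ≤ (⌊t * (n + 1)⌋₊ : ℝ≥0∞) / (n + 1 : ℝ≥0∞) := by
  intro t ht
  set k := ⌊t * (n + 1)⌋₊ with hk
  set E : Fin (n + 1) → Set Ω := fun j =>
    {ω | (Finset.univ.filter (fun i => S i ω ≤ S j ω)).card ≤ k} with hE
  have hRmeas : Measurable (fun f : Fin (n + 1) → ℝ =>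
      (Finset.univ.filter (fun i => f i ≤ f (Fin.last n))).card) := by
    have : (fun f : Fin (n + 1) → ℝ =>
        (Finset.univ.filter (fun i => f i ≤ f (Fin.last n))).card)
        = fun f => ∑ i : Fin (n + 1), if f i ≤ f (Fin.last n) then 1 else 0 := by
      funext f
      rw [Finset.card_filter]
    rw [this]
    exact Finset.measurable_sum _ (fun i _ =>
      Measurable.ite (measurableSet_le (measurable_pi_apply i)
        (measurable_pi_apply (Fin.last n))) measurable_const measurable_const)
  set B : Set (Fin (n + 1) → ℝ) :=
    {f | (Finset.univ.filter (fun i => f i ≤ f (Fin.last n))).card ≤ k} with hB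
  have hBmeas : MeasurableSet B := hRmeas (by trivial : MeasurableSet {m : ℕ | m ≤ k})
  have hvec : Measurable (fun ω => fun i => S i ω) :=
    measurable_pi_lambda _ (fun i => hmeas i)
  have hEmeas : ∀ j, MeasurableSet (E j) :=
    fun j => (measurable_rank_count S hmeas j) (by trivial : MeasurableSet {m : ℕ | m ≤ k})
  -- equal probabilities by exchangeability
  have hEeq : ∀ j, P (E j) = P (E (Fin.last n)) := by
    intro j
    set σ := Equiv.swap j (Fin.last n) with hσ
    have hmap := hexch σ
    have hperm : Measurable (fun ω => fun i : Fin (n + 1) => S (σ i) ω) :=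
      measurable_pi_lambda _ (fun i => hmeas _)
    have h1 : P ((fun ω => fun i : Fin (n + 1) => S (σ i) ω) ⁻¹' B)
        = P ((fun ω => fun i : Fin (n + 1) => S i ω) ⁻¹' B) := by
      rw [← Measure.map_apply hperm hBmeas, ← Measure.map_apply hvec hBmeas, hmap]
    have h2 : (fun ω => fun i : Fin (n + 1) => S i ω) ⁻¹' B = E (Fin.last n) := by
      ext ω; simp [hB, hE]
    have h3 : (fun ω => fun i : Fin (n + 1) => S (σ i) ω) ⁻¹' B = E j := by
      ext ω
      simp only [hB, hE, Set.mem_setOf_eq, Set.mem_preimage]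
      have hσlast : σ (Fin.last n) = j := Equiv.swap_apply_right _ _
      have hcard : (Finset.univ.filter (fun i => S (σ i) ω ≤ S (σ (Fin.last n)) ω)).card
          = (Finset.univ.filter (fun i => S i ω ≤ S j ω)).card := by
        rw [hσlast]
        exact filter_perm_card σ (fun i => S i ω ≤ S j ω)
      rw [hcard]
    rw [← h2, ← h1, h3]
  -- the target set equals E (Fin.last n)
  have hset : {ω | ((1 + (Finset.univ.filter
        (fun i : Fin n => S i.castSucc ω ≤ S (Fin.last n) ω)).card : ℝ) / (n + 1)) ≤ t}
      = E (Fin.last n) := by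
    ext ω
    simp only [hE, Set.mem_setOf_eq]
    have hcard : (Finset.univ.filter (fun i : Fin (n + 1) =>
        S i ω ≤ S (Fin.last n) ω)).card
        = (Finset.univ.filter (fun i : Fin n =>
          S i.castSucc ω ≤ S (Fin.last n) ω)).card + 1 := by
      rw [Finset.card_filter, Finset.card_filter, Fin.sum_univ_castSucc]
      simp
    have hpos : (0 : ℝ) < (n : ℝ) + 1 := by positivity
    rw [div_le_iff₀ hpos, hcard]
    rw [show ((1 : ℝ) + ((Finset.univ.filter (fun i : Fin n =>
        S i.castSucc ω ≤ S (Fin.last n) ω)).card : ℝ))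
      = (((Finset.univ.filter (fun i : Fin n =>
        S i.castSucc ω ≤ S (Fin.last n) ω)).card + 1 : ℕ) : ℝ) by push_cast; ring]
    rw [hk, ← Nat.le_floor_iff (mul_nonneg ht.1 (by positivity) : (0 : ℝ) ≤ t * ((n : ℝ) + 1))]
  -- sum of probabilities is bounded by k
  have hsum : ∑ j : Fin (n + 1), P (E j) ≤ (k : ℝ≥0∞) := by
    have h1 : ∀ j : Fin (n + 1), P (E j) = ∫⁻ ω, (E j).indicator (fun _ => 1) ω ∂P :=
      fun j => (lintegral_indicator_one (hEmeas j)).symm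
    calc ∑ j : Fin (n + 1), P (E j)
        = ∫⁻ ω, ∑ j : Fin (n + 1), (E j).indicator (fun _ => 1) ω ∂P := by
          rw [lintegral_finset_sum]
          · exact Finset.sum_congr rfl (fun j _ => h1 j)
          · exact fun j _ => (measurable_const.indicator (hEmeas j))
      _ ≤ ∫⁻ _, (k : ℝ≥0∞) ∂P := by
          refine lintegral_mono (fun ω => ?_)
          have heq : ∑ j : Fin (n + 1), (E j).indicator (fun _ => (1 : ℝ≥0∞)) ω
              = ((Finset.univ.filter (fun j : Fin (n + 1) => ω ∈ E j)).card : ℝ≥0∞) := by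
            rw [Finset.card_filter]
            push_cast
            refine Finset.sum_congr rfl (fun j _ => ?_)
            by_cases hj : ω ∈ E j <;> simp [Set.indicator_apply, hj]
          rw [heq]
          have hcomb := rank_count_le (fun i => S i ω) k
          have hle : (Finset.univ.filter (fun j : Fin (n + 1) => ω ∈ E j)).card ≤ k := by
            refine le_trans (le_of_eq ?_) hcomb
            congr 1
          exact Nat.cast_le.mpr hle
      _ = (k : ℝ≥0∞) := by simp
  have hmain : ((n : ℝ≥0∞) + 1) * P (E (Fin.last n)) ≤ (k : ℝ≥0∞) := by
    have hs : ∑ j : Fin (n + 1), P (E j) = ((n : ℝ≥0∞) + 1) * P (E (Fin.last n)) := by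
      rw [Finset.sum_congr rfl (fun j _ => hEeq j)]
      simp [Finset.sum_const, Finset.card_univ, nsmul_eq_mul]
    rw [← hs]
    exact hsum
  rw [hset]
  rw [ENNReal.le_div_iff_mul_le (by simp) (by simp)]
  rw [mul_comm] at hmain
  convert hmain using 2
end
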